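/- Let ε ∈ (0,1], k ≥ 1, 0 < s₁ < … < s_k, and x ∈ ℝ^k. Then ε^{-k} P[∏_{i=1}^k 1{|x_i − B_{s_i}| ≤ ε/2}] ≤ ∏_{i=1}^k ρ(s_i − s_{i−1}, x_i − x_{i−1}) · e^{|x_i − x_{i−1}|/(s_i − s_{i−1})}, where B is a standard Brownian motion started at 0 and s₀ = x₀ = 0. -/

import Mathlib

open MeasureTheory

/-- The one-dimensional heat kernel / Gaussian transition density. -/
noncomputable def heatKernel (s x : ℝ) : ℝ :=
  Real.exp (-x ^ 2 / (2 * s)) / Real.sqrt (2 * Real.pi * s)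

/-- Previous coordinate, with the convention `s₀ = 0` (resp. `x₀ = 0`). -/
def prevCoord {k : ℕ} (s : Fin k → ℝ) (j : Fin k) : ℝ :=
  if h : (j : ℕ) = 0 then 0 else s ⟨(j : ℕ) - 1, by omega⟩

lemma heatKernel_nonneg (s x : ℝ) : 0 ≤ heatKernel s x :=
  div_nonneg (Real.exp_nonneg _) (Real.sqrt_nonneg _)

lemma heatKernel_le {a u v : ℝ} (ha : 0 < a) (h : |v - u| ≤ 1) :
    heatKernel a v ≤ heatKernel a u * Real.exp (|u| / a) := by
  unfold heatKernel
  rw [div_mul_eq_mul_div, ← Real.exp_add]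
  have hS : 0 < Real.sqrt (2 * Real.pi * a) :=
    Real.sqrt_pos.mpr (by positivity)
  apply div_le_div_of_nonneg_right ?_ hS.le |>.trans_eq rfl
  apply Real.exp_le_exp.mpr
  have habs := abs_le.mp h
  have hu := abs_nonneg u
  have hu2 := neg_abs_le u
  have hu3 := le_abs_self u
  have key : u ^ 2 - v ^ 2 ≤ 2 * |u| := by
    nlinarith [sq_nonneg (v - u), neg_abs_le (u * (v - u)), le_abs_self (u * (v - u)),
      abs_mul u (v - u), mul_le_of_le_one_right (abs_nonneg u) h]
  have h2a : (0 : ℝ) < 2 * a := by linarith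
  have e1 : -u ^ 2 / (2 * a) + |u| / a - (-v ^ 2 / (2 * a)) = (v ^ 2 - u ^ 2 + 2 * |u|) / (2 * a) := by
    field_simp
    ring
  have : 0 ≤ (v ^ 2 - u ^ 2 + 2 * |u|) / (2 * a) := div_nonneg (by linarith) (le_of_lt h2a)
  linarith [e1 ▸ this]

/-- For `ε ∈ (0,1]`, `k ≥ 1`, `0 < s₁ < … < s_k` and `x ∈ ℝ^k`,
`ε^{-k} P[∏ᵢ 1{|xᵢ − B_{sᵢ}| ≤ ε/2}]
  ≤ ∏ᵢ ρ(sᵢ−s_{i−1}, xᵢ−x_{i−1}) e^{|xᵢ−x_{i−1}|/(sᵢ−s_{i−1})}`.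
The Wiener expectation is expressed, via the Markov property, as the integral of the
indicator against the product of Gaussian transition densities. -/
theorem small_tube_prob_le (k : ℕ) (hk : 1 ≤ k) (ε : ℝ) (hε : ε ∈ Set.Ioc (0 : ℝ) 1)
    (s x : Fin k → ℝ) (hs : ∀ i, 0 < s i) (hmono : StrictMono s) :
    (ε ^ k)⁻¹ *
      ∫ y : Fin k → ℝ, ∏ i : Fin k,
        (if |x i - y i| ≤ ε / 2 then (1 : ℝ) else 0) *
          heatKernel (s i - prevCoord s i) (y i - prevCoord y i)
      ≤ ∏ i : Fin k,
          heatKernel (s i - prevCoord s i) (x i - prevCoord x i) *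
            Real.exp (|x i - prevCoord x i| / (s i - prevCoord s i)) := by
  obtain ⟨hε0, hε1⟩ := hε
  -- the target constants
  set c : Fin k → ℝ := fun i =>
    heatKernel (s i - prevCoord s i) (x i - prevCoord x i) *
      Real.exp (|x i - prevCoord x i| / (s i - prevCoord s i)) with hc
  have hcnn : ∀ i, 0 ≤ c i := fun i =>
    mul_nonneg (heatKernel_nonneg _ _) (Real.exp_nonneg _)
  -- positivity of time increments
  have hΔ : ∀ i : Fin k, 0 < s i - prevCoord s i := by
    intro i
    by_cases hi : (i : ℕ) = 0
    · simp only [prevCoord, dif_pos hi, sub_zero]; exact hs i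
    · simp only [prevCoord, dif_neg hi]
      have : (⟨(i : ℕ) - 1, by omega⟩ : Fin k) < i := by
        simp [Fin.lt_def]; omega
      linarith [hmono this]
  -- the majorant
  set F : Fin k → ℝ → ℝ := fun i t => (if |x i - t| ≤ ε / 2 then (1 : ℝ) else 0) * c i with hF
  have hFnn : ∀ i t, 0 ≤ F i t := by
    intro i t; dsimp [F]; split <;> simp [hcnn i]
  -- pointwise bound
  have hpt : ∀ y : Fin k → ℝ,
      (∏ i : Fin k, (if |x i - y i| ≤ ε / 2 then (1 : ℝ) else 0) *
        heatKernel (s i - prevCoord s i) (y i - prevCoord y i)) ≤ ∏ i, F i (y i) := by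
    intro y
    by_cases hall : ∀ i, |x i - y i| ≤ ε / 2
    · apply Finset.prod_le_prod
      · intro i _
        split <;> simp [heatKernel_nonneg]
      · intro i _
        rw [if_pos (hall i)]
        dsimp [F]
        rw [if_pos (hall i), one_mul, one_mul]
        have key : |(y i - prevCoord y i) - (x i - prevCoord x i)| ≤ ε := by
          by_cases hi : (i : ℕ) = 0
          · simp only [prevCoord, dif_pos hi, sub_zero]
            rw [abs_sub_comm]
            linarith [hall i]
          · simp only [prevCoord, dif_neg hi]
            have h1 := hall i
            have h2 := hall ⟨(i : ℕ) - 1, by omega⟩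
            rw [abs_sub_comm] at h1 h2
            calc |(y i - y ⟨(i : ℕ) - 1, by omega⟩) - (x i - x ⟨(i : ℕ) - 1, by omega⟩)|
                = |(y i - x i) - (y ⟨(i : ℕ) - 1, by omega⟩ - x ⟨(i : ℕ) - 1, by omega⟩)| := by
                  ring_nf
              _ ≤ |y i - x i| + |y ⟨(i : ℕ) - 1, by omega⟩ - x ⟨(i : ℕ) - 1, by omega⟩| :=
                  abs_sub _ _
              _ ≤ ε := by linarith
        exact heatKernel_le (hΔ i) (key.trans hε1)
    · push_neg at hall
      obtain ⟨i, hi⟩ := hall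
      have : (∏ i : Fin k, (if |x i - y i| ≤ ε / 2 then (1 : ℝ) else 0) *
          heatKernel (s i - prevCoord s i) (y i - prevCoord y i)) = 0 :=
        Finset.prod_eq_zero (Finset.mem_univ i) (by rw [if_neg (not_le.mpr hi), zero_mul])
      rw [this]
      exact Finset.prod_nonneg fun j _ => hFnn j (y j)
  -- the majorant as indicators
  have hFind : ∀ i, F i = (Set.Icc (x i - ε / 2) (x i + ε / 2)).indicator (fun _ => c i) := by
    intro i
    funext t
    have hmem : |x i - t| ≤ ε / 2 ↔ t ∈ Set.Icc (x i - ε / 2) (x i + ε / 2) := by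
      rw [Set.mem_Icc, abs_le]
      constructor <;> (rintro ⟨h1, h2⟩; constructor <;> linarith)
    dsimp [F]
    by_cases h : |x i - t| ≤ ε / 2
    · rw [if_pos h, Set.indicator_of_mem (hmem.mp h), one_mul]
    · rw [if_neg h, Set.indicator_of_notMem (fun hm => h (hmem.mpr hm)), zero_mul]
  have hFint : ∀ i, Integrable (F i) := by
    intro i
    rw [hFind i]
    exact (integrableOn_const measure_Icc_lt_top.ne).integrable_indicator
      measurableSet_Icc
  have hFval : ∀ i, ∫ t, F i t = ε * c i := by
    intro i
    rw [hFind i]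
    rw [integral_indicator_const _ measurableSet_Icc, Real.volume_real_Icc_of_le (by linarith), smul_eq_mul]
    rw [show x i + ε / 2 - (x i - ε / 2) = ε by ring]
  -- compare integrals
  have hint : (∫ y : Fin k → ℝ, ∏ i : Fin k,
        (if |x i - y i| ≤ ε / 2 then (1 : ℝ) else 0) *
          heatKernel (s i - prevCoord s i) (y i - prevCoord y i))
      ≤ ∫ y : Fin k → ℝ, ∏ i, F i (y i) := by
    apply integral_mono_of_nonneg
    · filter_upwards with y
      exact Finset.prod_nonneg fun i _ => by split <;> simp [heatKernel_nonneg]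
    · exact Integrable.fintype_prod hFint
    · filter_upwards with y using hpt y
  have hval : ∫ y : Fin k → ℝ, ∏ i, F i (y i) = ε ^ k * ∏ i, c i := by
    rw [MeasureTheory.integral_fintype_prod_volume_eq_prod F]
    simp_rw [hFval]
    rw [Finset.prod_mul_distrib, Finset.prod_const, Finset.card_univ, Fintype.card_fin]
  have hεk : (0 : ℝ) < ε ^ k := pow_pos hε0 k
  calc (ε ^ k)⁻¹ * ∫ y : Fin k → ℝ, ∏ i : Fin k,
        (if |x i - y i| ≤ ε / 2 then (1 : ℝ) else 0) *
          heatKernel (s i - prevCoord s i) (y i - prevCoord y i)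
      ≤ (ε ^ k)⁻¹ * (ε ^ k * ∏ i, c i) := by
        apply mul_le_mul_of_nonneg_left _ (inv_nonneg.mpr hεk.le)
        rw [← hval]; exact hint
    _ = ∏ i, c i := by
        rw [← mul_assoc, inv_mul_cancel₀ hεk.ne', one_mul]
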